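/- Let $\mathcal{H}_+$ denote the set of $n\times n$ Hermitian positive-definite complex matrices. For any $A \in \mathcal{H}_+$, $\det(A)^{1/n} = \frac{1}{n}\inf\{\operatorname{tr}(AB) : B \in \mathcal{H}_+,\ \det(B) = 1\}$. -/

import Mathlib

open scoped ComplexOrder

lemma herm_trace_eq_sum_eigenvalues {n : ℕ} {M : Matrix (Fin n) (Fin n) ℂ}
    (hM : M.IsHermitian) : M.trace = ∑ i, (hM.eigenvalues i : ℂ) := by
  exact hM.trace_eq_sum_eigenvalues

lemma posdef_smul {n : ℕ} {M : Matrix (Fin n) (Fin n) ℂ} (hM : M.PosDef)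
    {c : ℝ} (hc : 0 < c) : ((c : ℂ) • M).PosDef := by
  rw [Matrix.posDef_iff_dotProduct_mulVec] at hM ⊢
  constructor
  · unfold Matrix.IsHermitian
    rw [Matrix.conjTranspose_smul, hM.1]
    norm_num
  · intro x hx
    have := hM.2 hx
    rw [Matrix.smul_mulVec, dotProduct_smul]
    have hc' : (0:ℂ) < (c:ℂ) := by exact_mod_cast hc
    exact mul_pos hc' this


/-- Gaveau's lemma: for a positive-definite Hermitian `n×n` matrix `A`,
`det(A)^{1/n} = (1/n)·inf{tr(AB) : B Hermitian positive-definite, det B = 1}`. -/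
theorem stmt5 (n : ℕ) (hn : 0 < n) (A : Matrix (Fin n) (Fin n) ℂ) (hA : A.PosDef) :
    (A.det.re) ^ ((n : ℝ)⁻¹) =
      (1 / n : ℝ) * sInf { t : ℝ | ∃ B : Matrix (Fin n) (Fin n) ℂ,
        B.PosDef ∧ B.det = 1 ∧ (A * B).trace = (t : ℂ) } := by
  have hn' : (0:ℝ) < n := by exact_mod_cast hn
  have hdet : (0:ℂ) < A.det := hA.det_pos
  have him : A.det.im = 0 := by
    have := Complex.lt_def.mp hdet
    simpa using this.2.symm
  have hre : 0 < A.det.re := by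
    have := Complex.lt_def.mp hdet
    simpa using this.1
  have hdetre : A.det = (A.det.re : ℂ) := Complex.ext rfl (by simp [him])
  set d : ℝ := (A.det.re) ^ ((n : ℝ)⁻¹) with hd
  have hdpos : 0 < d := Real.rpow_pos_of_pos hre _
  have hdn : (d : ℝ) ^ n = A.det.re := by
    rw [hd, ← Real.rpow_natCast (A.det.re ^ ((n:ℝ)⁻¹)) n, ← Real.rpow_mul hre.le,
      inv_mul_cancel₀ (by exact_mod_cast hn.ne'), Real.rpow_one]
  -- membership : B₀ = d • A⁻¹
  have hmem : (n : ℝ) * d ∈ { t : ℝ | ∃ B : Matrix (Fin n) (Fin n) ℂ,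
      B.PosDef ∧ B.det = 1 ∧ (A * B).trace = (t : ℂ) } := by
    refine ⟨(d : ℂ) • A⁻¹, posdef_smul hA.inv hdpos, ?_, ?_⟩
    · rw [Matrix.det_smul, Matrix.det_nonsing_inv]
      rw [hdetre, Ring.inverse_eq_inv]
      have : ((d:ℂ)) ^ Fintype.card (Fin n) = (A.det.re : ℂ) := by
        rw [Fintype.card_fin]
        exact_mod_cast congrArg Complex.ofReal hdn
      rw [this, mul_inv_cancel₀ (by exact_mod_cast hre.ne')]
    · rw [Matrix.mul_smul, Matrix.mul_nonsing_inv _ hdet.ne'.isUnit,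
        Matrix.trace_smul, Matrix.trace_one]
      simp [Fintype.card_fin]
      ring
  -- lower bound
  have hlb : ∀ t ∈ { t : ℝ | ∃ B : Matrix (Fin n) (Fin n) ℂ,
      B.PosDef ∧ B.det = 1 ∧ (A * B).trace = (t : ℂ) }, (n : ℝ) * d ≤ t := by
    rintro t ⟨B, hB, hBdet, hBtr⟩
    obtain ⟨S, hSps, hSS⟩ : ∃ S : Matrix (Fin n) (Fin n) ℂ, S.PosSemidef ∧ S * S = A := by
      open scoped MatrixOrder in
      exact ⟨CFC.sqrt A, Matrix.nonneg_iff_posSemidef.mp (CFC.sqrt_nonneg A),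
        CFC.sqrt_mul_sqrt_self A hA.posSemidef.nonneg⟩
    have hMps : (S * B * S).PosSemidef := by
      have := hB.posSemidef.conjTranspose_mul_mul_same S
      rwa [hSps.1] at this
    have hMtr : (S * B * S).trace = (t : ℂ) := by
      rw [Matrix.trace_mul_comm, ← mul_assoc, hSS, hBtr]
    have hMdet : (S * B * S).det = A.det := by
      rw [Matrix.det_mul, Matrix.det_mul, hBdet, mul_one, ← Matrix.det_mul, hSS]
    have hlnn : ∀ i, 0 ≤ hMps.1.eigenvalues i := hMps.eigenvalues_nonneg
    have htr : t = ∑ i, hMps.1.eigenvalues i := by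
      have := herm_trace_eq_sum_eigenvalues hMps.1
      rw [hMtr] at this
      exact_mod_cast this
    have hprod : ∏ i, hMps.1.eigenvalues i = A.det.re := by
      have := hMps.1.det_eq_prod_eigenvalues
      rw [hMdet, hdetre] at this
      have h2 : ((∏ i, hMps.1.eigenvalues i : ℝ) : ℂ) = ((A.det.re : ℝ) : ℂ) := by
        push_cast
        exact this.symm
      exact_mod_cast h2
    have amgm := Real.geom_mean_le_arith_mean_weighted Finset.univ
      (fun _ => (n:ℝ)⁻¹) hMps.1.eigenvalues (fun i _ => by positivity)
      (by simp [Finset.card_univ, mul_inv_cancel₀ hn'.ne'])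
      (fun i _ => hlnn i)
    have hgeo : ∏ i : Fin n, hMps.1.eigenvalues i ^ ((n:ℝ)⁻¹) = d := by
      rw [Real.finset_prod_rpow _ _ (fun i _ => hlnn i)]
      rw [hprod, hd]
    rw [hgeo, ← Finset.mul_sum] at amgm
    have h2 := mul_le_mul_of_nonneg_left amgm hn'.le
    rw [← mul_assoc, mul_inv_cancel₀ hn'.ne', one_mul] at h2
    linarith [htr]
  have heq : sInf { t : ℝ | ∃ B : Matrix (Fin n) (Fin n) ℂ,
      B.PosDef ∧ B.det = 1 ∧ (A * B).trace = (t : ℂ) } = (n:ℝ) * d :=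
    IsLeast.csInf_eq ⟨hmem, hlb⟩
  rw [heq, ← mul_assoc]
  field_simp
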